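/- Let L = Σ_{t₁,t₂,t₃ ∈ F_q×} θ(t₁ + t₂ + t₃ - t₁²t₂⁻²t₃ - t₁²t₂⁻³t₃² - t₁t₂⁻²t₃²). Then the number of F_q-rational points of the image V of the triple embedding P¹ ↪ P³ satisfies #V(F_q) = -2q² + 6q - 1 + ((q-1)L - 1)/q. -/

import Mathlib

open Finset Projectivization

section Aux

variable {F : Type} [Field F] [Fintype F] [DecidableEq F]

private lemma cond_mk12 (v : Fin 4 → F) (hv : v ≠ 0) :
    ((Projectivization.mk F v hv).rep 0 * (Projectivization.mk F v hv).rep 2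
        = ((Projectivization.mk F v hv).rep 1) ^ 2 ∧
      (Projectivization.mk F v hv).rep 1 * (Projectivization.mk F v hv).rep 3
        = ((Projectivization.mk F v hv).rep 2) ^ 2 ∧
      (Projectivization.mk F v hv).rep 0 * (Projectivization.mk F v hv).rep 3
        = (Projectivization.mk F v hv).rep 1 * (Projectivization.mk F v hv).rep 2)
    ↔ (v 0 * v 2 = v 1 ^ 2 ∧ v 1 * v 3 = v 2 ^ 2 ∧ v 0 * v 3 = v 1 * v 2) := by
  obtain ⟨a, ha⟩ := Projectivization.exists_smul_eq_mk_rep F v hv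
  have hrep : ∀ i, (Projectivization.mk F v hv).rep i = (a : F) * v i := by
    intro i
    rw [← ha, Pi.smul_apply, Units.smul_def, smul_eq_mul]
  have ha2 : ((a : F)) ^ 2 ≠ 0 := pow_ne_zero _ a.ne_zero
  simp only [hrep]
  constructor
  · rintro ⟨h1, h2, h3⟩
    exact ⟨mul_left_cancel₀ ha2 (by linear_combination h1),
      mul_left_cancel₀ ha2 (by linear_combination h2),
      mul_left_cancel₀ ha2 (by linear_combination h3)⟩
  · rintro ⟨h1, h2, h3⟩
    exact ⟨by linear_combination ((a : F)) ^ 2 * h1,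
      by linear_combination ((a : F)) ^ 2 * h2,
      by linear_combination ((a : F)) ^ 2 * h3⟩

private lemma card_S12 :
    Nat.card {p : Projectivization F (Fin 4 → F) |
        p.rep 0 * p.rep 2 = (p.rep 1) ^ 2 ∧
        p.rep 1 * p.rep 3 = (p.rep 2) ^ 2 ∧
        p.rep 0 * p.rep 3 = p.rep 1 * p.rep 2} = Fintype.card F + 1 := by
  have hne : ∀ u : F, (![1, u, u ^ 2, u ^ 3] : Fin 4 → F) ≠ 0 := by
    intro u h
    have := congrFun h 0
    simp at this
  have hne0 : (![0, 0, 0, 1] : Fin 4 → F) ≠ 0 := by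
    intro h
    have := congrFun h 3
    simp at this
  set S := {p : Projectivization F (Fin 4 → F) |
        p.rep 0 * p.rep 2 = (p.rep 1) ^ 2 ∧
        p.rep 1 * p.rep 3 = (p.rep 2) ^ 2 ∧
        p.rep 0 * p.rep 3 = p.rep 1 * p.rep 2} with hS
  have hmem : ∀ (v : Fin 4 → F) (hv : v ≠ 0),
      (Projectivization.mk F v hv ∈ S ↔
        (v 0 * v 2 = v 1 ^ 2 ∧ v 1 * v 3 = v 2 ^ 2 ∧ v 0 * v 3 = v 1 * v 2)) := by
    intro v hv
    rw [hS]
    exact cond_mk12 v hv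
  classical
  let f : Option F → S := fun o =>
    match o with
    | none => ⟨Projectivization.mk F ![0, 0, 0, 1] hne0, by
        rw [hmem]
        refine ⟨?_, ?_, ?_⟩ <;> simp⟩
    | some u => ⟨Projectivization.mk F ![1, u, u ^ 2, u ^ 3] (hne u), by
        rw [hmem]
        refine ⟨?_, ?_, ?_⟩ <;> simp <;> ring⟩
  have hbij : Function.Bijective f := by
    constructor
    · intro o1 o2 h
      have h' := Subtype.ext_iff.mp h
      match o1, o2 with
      | none, none => rfl
      | none, some u =>
        rw [Projectivization.mk_eq_mk_iff] at h'
        obtain ⟨a, ha⟩ := h'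
        have := congrFun ha 0
        simp [Units.smul_def] at this
      | some u, none =>
        rw [Projectivization.mk_eq_mk_iff] at h'
        obtain ⟨a, ha⟩ := h'
        have := congrFun ha 0
        simp [Units.smul_def] at this
      | some u, some u' =>
        rw [Projectivization.mk_eq_mk_iff] at h'
        obtain ⟨a, ha⟩ := h'
        have h0 := congrFun ha 0
        have h1 := congrFun ha 1
        simp [Units.smul_def] at h0 h1
        subst h0
        norm_num at h1
        rw [h1]
    · rintro ⟨p, hp⟩
      rw [hS, Set.mem_setOf_eq] at hp
      obtain ⟨h1, h2, h3⟩ := hp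
      have hv : p.rep ≠ 0 := p.rep_nonzero
      by_cases h0 : p.rep 0 = 0
      · refine ⟨none, Subtype.ext ?_⟩
        show Projectivization.mk F ![0, 0, 0, 1] hne0 = p
        have hv1 : p.rep 1 = 0 := by
          have : p.rep 1 ^ 2 = 0 := by rw [← h1, h0, zero_mul]
          exact pow_eq_zero_iff (n := 2) (by norm_num) |>.mp this
        have hv2 : p.rep 2 = 0 := by
          have : p.rep 2 ^ 2 = 0 := by rw [← h2, hv1, zero_mul]
          exact pow_eq_zero_iff (n := 2) (by norm_num) |>.mp this
        have hv3 : p.rep 3 ≠ 0 := by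
          intro h3'
          apply hv
          funext i
          fin_cases i <;> simp [h0, hv1, hv2, h3']
        conv_rhs => rw [← p.mk_rep]
        rw [Projectivization.mk_eq_mk_iff]
        refine ⟨Units.mk0 (p.rep 3)⁻¹ (inv_ne_zero hv3), ?_⟩
        funext i
        fin_cases i <;>
          simp [Units.smul_def, h0, hv1, hv2, inv_mul_cancel₀ hv3]
      · refine ⟨some (p.rep 1 / p.rep 0), Subtype.ext ?_⟩
        show Projectivization.mk F ![1, _, _, _] _ = p
        conv_rhs => rw [← p.mk_rep]
        rw [Projectivization.mk_eq_mk_iff]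
        refine ⟨Units.mk0 (p.rep 0)⁻¹ (inv_ne_zero h0), ?_⟩
        funext i
        fin_cases i
        · simp [Units.smul_def, inv_mul_cancel₀ h0]
        · simp [Units.smul_def]
          field_simp
        · simp [Units.smul_def]
          field_simp
          linear_combination h1
        · simp [Units.smul_def]
          field_simp
          linear_combination p.rep 0 * h3 + p.rep 1 * h1
  calc Nat.card S = Nat.card (Option F) :=
        (Nat.card_congr (Equiv.ofBijective f hbij)).symm
    _ = Fintype.card F + 1 := by
        rw [Nat.card_eq_fintype_card, Fintype.card_option]

private lemma sum_units_theta12 (θ : AddChar F ℂ) (hθ : θ ≠ 1) :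
    ∑ b : Fˣ, θ (b : F) = -1 := by
  have hθ0 : θ ≠ 0 := by rwa [← AddChar.one_eq_zero]
  have h0 : ∑ x : F, θ x = 0 := AddChar.sum_eq_zero_iff_ne_zero.2 hθ0
  have h1 : ∑ b : Fˣ, θ (b : F) = ∑ x ∈ ({0}ᶜ : Finset F), θ x := by
    calc ∑ b : Fˣ, θ (b : F) = ∑ a : {a : F // a ≠ 0}, θ (a : F) :=
          Equiv.sum_comp unitsEquivNeZero (fun a : {a : F // a ≠ 0} => θ (a : F))
      _ = ∑ x ∈ ({0}ᶜ : Finset F), θ x :=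
          (Finset.sum_subtype ({0}ᶜ : Finset F) (by simp) (fun x => θ x)).symm
  have h2 : ∑ x ∈ ({0}ᶜ : Finset F), θ x + ∑ x ∈ ({0} : Finset F), θ x = ∑ x : F, θ x :=
    Finset.sum_compl_add_sum {0} _
  simp only [Finset.sum_singleton, AddChar.map_zero_eq_one, h0] at h2
  rw [h1]
  linear_combination h2

private lemma sum_shift12 (θ : AddChar F ℂ) (hθ : θ ≠ 1) (h : F) :
    ∑ b : Fˣ, θ ((b : F) * h) = if h = 0 then ((Fintype.card F : ℂ) - 1) else -1 := by
  split_ifs with hh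
  · subst hh
    simp only [mul_zero, AddChar.map_zero_eq_one]
    rw [Finset.sum_const, Finset.card_univ, Fintype.card_units, nsmul_eq_mul, mul_one,
      Nat.cast_sub Fintype.card_pos, Nat.cast_one]
  · calc ∑ b : Fˣ, θ ((b : F) * h)
        = ∑ b : Fˣ, θ (((b * Units.mk0 h hh : Fˣ) : F)) := by
          simp [Units.val_mk0]
      _ = ∑ b : Fˣ, θ (b : F) :=
          Fintype.sum_equiv (Equiv.mulRight (Units.mk0 h hh)) _ _ (fun b => rfl)
      _ = -1 := sum_units_theta12 θ hθ

private lemma L_val12 (θ : AddChar F ℂ) (hθ : θ ≠ 1) :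
    (∑ t₁ : Fˣ, ∑ t₂ : Fˣ, ∑ t₃ : Fˣ,
        θ ((t₁ : F) + (t₂ : F) + (t₃ : F)
          - (t₁ : F) ^ 2 * ((t₂ : F)⁻¹) ^ 2 * (t₃ : F)
          - (t₁ : F) ^ 2 * ((t₂ : F)⁻¹) ^ 3 * (t₃ : F) ^ 2
          - (t₁ : F) * ((t₂ : F)⁻¹) ^ 2 * (t₃ : F) ^ 2))
      = 2 * (Fintype.card F : ℂ) ^ 2 - 3 * (Fintype.card F : ℂ) - 1 := by
  classical
  set q := Fintype.card F with hq
  have hq1 : 1 < q := Fintype.one_lt_card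
  have hcardU : ((Fintype.card Fˣ : ℕ) : ℂ) = (q : ℂ) - 1 := by
    rw [Fintype.card_units, Nat.cast_sub Fintype.card_pos, Nat.cast_one]
  set g : Fˣ → Fˣ → F := fun a c =>
    1 + (a : F) + (c : F) - ((a : F) * (c : F)) * ((a : F) + (c : F) + (a : F) * (c : F))
    with hg
  -- step 1 : rewrite L
  have step1 : (∑ t₁ : Fˣ, ∑ t₂ : Fˣ, ∑ t₃ : Fˣ,
        θ ((t₁ : F) + (t₂ : F) + (t₃ : F)
          - (t₁ : F) ^ 2 * ((t₂ : F)⁻¹) ^ 2 * (t₃ : F)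
          - (t₁ : F) ^ 2 * ((t₂ : F)⁻¹) ^ 3 * (t₃ : F) ^ 2
          - (t₁ : F) * ((t₂ : F)⁻¹) ^ 2 * (t₃ : F) ^ 2))
      = ∑ a : Fˣ, ∑ c : Fˣ, ∑ b : Fˣ, θ ((b : F) * g a c) := by
    rw [Finset.sum_comm]
    have : ∀ b : Fˣ, (∑ t₁ : Fˣ, ∑ t₃ : Fˣ,
        θ ((t₁ : F) + (b : F) + (t₃ : F)
          - (t₁ : F) ^ 2 * ((b : F)⁻¹) ^ 2 * (t₃ : F)
          - (t₁ : F) ^ 2 * ((b : F)⁻¹) ^ 3 * (t₃ : F) ^ 2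
          - (t₁ : F) * ((b : F)⁻¹) ^ 2 * (t₃ : F) ^ 2))
        = ∑ a : Fˣ, ∑ c : Fˣ, θ ((b : F) * g a c) := by
      intro b
      rw [← Equiv.sum_comp (Equiv.mulRight b) (fun t₁ : Fˣ => ∑ t₃ : Fˣ,
        θ ((t₁ : F) + (b : F) + (t₃ : F)
          - (t₁ : F) ^ 2 * ((b : F)⁻¹) ^ 2 * (t₃ : F)
          - (t₁ : F) ^ 2 * ((b : F)⁻¹) ^ 3 * (t₃ : F) ^ 2
          - (t₁ : F) * ((b : F)⁻¹) ^ 2 * (t₃ : F) ^ 2))]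
      refine Finset.sum_congr rfl fun a _ => ?_
      simp only [Equiv.coe_mulRight]
      rw [← Equiv.sum_comp (Equiv.mulRight b) (fun t₃ : Fˣ =>
        θ (((a * b : Fˣ) : F) + (b : F) + (t₃ : F)
          - ((a * b : Fˣ) : F) ^ 2 * ((b : F)⁻¹) ^ 2 * (t₃ : F)
          - ((a * b : Fˣ) : F) ^ 2 * ((b : F)⁻¹) ^ 3 * (t₃ : F) ^ 2
          - ((a * b : Fˣ) : F) * ((b : F)⁻¹) ^ 2 * (t₃ : F) ^ 2))]
      refine Finset.sum_congr rfl fun c _ => ?_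
      simp only [Equiv.coe_mulRight, Units.val_mul]
      congr 1
      have hb : (b : F) ≠ 0 := b.ne_zero
      rw [hg]
      field_simp
      ring
    rw [Finset.sum_congr rfl fun b _ => this b, Finset.sum_comm]
    refine Finset.sum_congr rfl fun a _ => Finset.sum_comm
  rw [step1]
  -- step 2 : inner sum over b
  have step2 : ∀ a c : Fˣ, (∑ b : Fˣ, θ ((b : F) * g a c))
      = if g a c = 0 then ((q : ℂ) - 1) else -1 := fun a c => sum_shift12 θ hθ (g a c)
  -- factorization of the condition
  have hfac : ∀ a c : Fˣ, (g a c = 0 ↔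
      ((a : F) = -1 ∨ c = (-1 : Fˣ) ∨ c = a⁻¹)) := by
    intro a c
    rw [hg]
    constructor
    · intro h
      have h' : ((a : F) + 1) * (((c : F) + 1) * ((a : F) * (c : F) - 1)) = 0 := by
        linear_combination -h
      rcases mul_eq_zero.mp h' with h1 | h2
      · left; linear_combination h1
      · rcases mul_eq_zero.mp h2 with h3 | h4
        · right; left
          ext
          rw [Units.val_neg, Units.val_one]
          linear_combination h3
        · right; right
          ext
          rw [Units.val_inv_eq_inv_val]
          field_simp
          linear_combination h4
    · rintro (h | h | h)
      · show 1 + (a : F) + (c : F)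
            - ((a : F) * (c : F)) * ((a : F) + (c : F) + (a : F) * (c : F)) = 0
        linear_combination (-(((c : F) + 1) * ((a : F) * (c : F) - 1))) * h
      · subst h
        show 1 + (a : F) + ((-1 : Fˣ) : F)
            - ((a : F) * ((-1 : Fˣ) : F))
              * ((a : F) + ((-1 : Fˣ) : F) + (a : F) * ((-1 : Fˣ) : F)) = 0
        simp only [Units.val_neg, Units.val_one]; ring
      · subst h
        show 1 + (a : F) + ((a⁻¹ : Fˣ) : F)
            - ((a : F) * ((a⁻¹ : Fˣ) : F))
              * ((a : F) + ((a⁻¹ : Fˣ) : F) + (a : F) * ((a⁻¹ : Fˣ) : F)) = 0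
        rw [Units.val_inv_eq_inv_val]
        have ha : (a : F) ≠ 0 := a.ne_zero
        field_simp
        ring
  -- step 3 : count
  have hinner : ∀ a : Fˣ, (∑ c : Fˣ, ∑ b : Fˣ, θ ((b : F) * g a c))
      = if (a : F) = -1 then ((q : ℂ) - 1) * ((q : ℂ) - 1) else (q : ℂ) + 1 := by
    intro a
    rw [Finset.sum_congr rfl fun c _ => step2 a c]
    split_ifs with ha
    · rw [Finset.sum_congr rfl fun c _ => if_pos ((hfac a c).2 (Or.inl ha))]
      rw [Finset.sum_const, Finset.card_univ, nsmul_eq_mul, hcardU]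
    · have hcond : ∀ c : Fˣ, (g a c = 0) ↔ c ∈ ({-1, a⁻¹} : Finset Fˣ) := by
        intro c
        rw [hfac a c, Finset.mem_insert, Finset.mem_singleton]
        constructor
        · rintro (h | h | h)
          · exact absurd h ha
          · exact Or.inl h
          · exact Or.inr h
        · rintro (h | h)
          · exact Or.inr (Or.inl h)
          · exact Or.inr (Or.inr h)
      have hrw : ∀ c : Fˣ, (if g a c = 0 then ((q : ℂ) - 1) else -1)
          = (if c ∈ ({-1, a⁻¹} : Finset Fˣ) then (q : ℂ) else 0) - 1 := by
        intro c
        by_cases h : g a c = 0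
        · rw [if_pos h, if_pos ((hcond c).1 h)]
        · rw [if_neg h, if_neg (fun hc => h ((hcond c).2 hc))]; ring
      rw [Finset.sum_congr rfl fun c _ => hrw c, Finset.sum_sub_distrib,
        Finset.sum_const, Finset.card_univ, nsmul_eq_mul, mul_one, hcardU]
      have hcard2 : ({-1, a⁻¹} : Finset Fˣ).card = 2 := by
        rw [Finset.card_pair]
        intro h
        apply ha
        have : a = -1 := by
          rw [← inv_inv a, ← h]
          simp
        rw [this, Units.val_neg, Units.val_one]
      rw [Finset.sum_ite_mem, Finset.univ_inter, Finset.sum_const, hcard2,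
        nsmul_eq_mul]
      push_cast
      ring
  rw [Finset.sum_congr rfl fun a _ => hinner a]
  have hrw2 : ∀ a : Fˣ, (if (a : F) = -1 then ((q : ℂ) - 1) * ((q : ℂ) - 1) else (q : ℂ) + 1)
      = ((q : ℂ) + 1) + (if a = (-1 : Fˣ) then ((q : ℂ) - 1) * ((q : ℂ) - 1) - ((q : ℂ) + 1) else 0) := by
    intro a
    have : ((a : F) = -1) ↔ a = (-1 : Fˣ) := by
      constructor
      · intro h; ext; rw [h, Units.val_neg, Units.val_one]
      · intro h; rw [h, Units.val_neg, Units.val_one]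
    rw [if_congr this rfl rfl]
    split_ifs <;> ring
  rw [Finset.sum_congr rfl fun a _ => hrw2 a, Finset.sum_add_distrib,
    Finset.sum_const, Finset.card_univ, nsmul_eq_mul, hcardU,
    Finset.sum_ite_eq' Finset.univ (-1 : Fˣ) (fun _ => ((q : ℂ) - 1) * ((q : ℂ) - 1) - ((q : ℂ) + 1)),
    if_pos (Finset.mem_univ _)]
  ring

end Aux

theorem stmt12 (F : Type) [Field F] [Fintype F] [DecidableEq F] (q : ℕ) (hq : q = Fintype.card F)
    (θ : AddChar F ℂ) (hθ : θ ≠ 1) (L : ℂ)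
    (hL : L = ∑ t₁ : Fˣ, ∑ t₂ : Fˣ, ∑ t₃ : Fˣ,
        θ ((t₁ : F) + (t₂ : F) + (t₃ : F)
          - (t₁ : F) ^ 2 * ((t₂ : F)⁻¹) ^ 2 * (t₃ : F)
          - (t₁ : F) ^ 2 * ((t₂ : F)⁻¹) ^ 3 * (t₃ : F) ^ 2
          - (t₁ : F) * ((t₂ : F)⁻¹) ^ 2 * (t₃ : F) ^ 2)) :
    (Nat.card {p : Projectivization F (Fin 4 → F) |
        p.rep 0 * p.rep 2 = (p.rep 1) ^ 2 ∧
        p.rep 1 * p.rep 3 = (p.rep 2) ^ 2 ∧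
        p.rep 0 * p.rep 3 = p.rep 1 * p.rep 2} : ℂ)
      = -2 * (q : ℂ) ^ 2 + 6 * q - 1 + (((q : ℂ) - 1) * L - 1) / q := by
  rw [card_S12 (F := F), ← hq]
  have hLv : L = 2 * (q : ℂ) ^ 2 - 3 * (q : ℂ) - 1 := by
    rw [hL, L_val12 θ hθ, ← hq]
  have hq0 : (q : ℂ) ≠ 0 := by
    have h : 0 < q := by rw [hq]; exact Fintype.card_pos
    exact_mod_cast h.ne'
  rw [hLv]
  push_cast
  field_simp
  ring
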